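/- For n ≥ 2, let L_n be the double directed string on vertex set {1,…,n+1} with edges e_i from i to i+1 and e_i' from i+1 to i for each 1 ≤ i ≤ n. Then {e_1,…,e_n} and {e_1',…,e_n'} are the only faces of Dlf(L_n) of cardinality n, and the pure (n−1)-skeleton of Dlf(L_n) is disconnected; hence Dlf(L_n) is not sequentially Cohen-Macaulay and not shellable. -/

import Mathlib

namespace ArXiv

/-! ## Multidigraphs and their directed-forest complexes.
A multidigraph on vertex type `V` with edge type `E` is given by source and
target maps `s t : E → V`. -/

/-- `σ` induces a directed cycle (of some length `n ≥ 1`) in the multidigraph `(s, t)`: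
its edges can be arranged cyclically, with pairwise distinct sources, the target of each
edge being the source of the next one. -/
def IsDirCycle {V E : Type} (s t : E → V) (n : ℕ) (σ : Finset E) : Prop :=
  0 < n ∧ ∃ g : ZMod n → E, Function.Injective g ∧
    (∀ e, e ∈ σ ↔ ∃ i, g i = e) ∧
    Function.Injective (fun i => s (g i)) ∧
    (∀ i, t (g i) = s (g (i + 1)))

/-- No subset of `σ` induces a directed cycle. -/
def NoDirCycleIn {V E : Type} (s t : E → V) (σ : Finset E) : Prop :=
  ∀ (n : ℕ) (τ : Finset E), τ ⊆ σ → ¬ IsDirCycle s t n τ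

/-- `σ` induces a vertex-disjoint union of directed paths: all sources are distinct,
all targets are distinct, and there is no directed cycle inside `σ`. -/
def IsLinearForest {V E : Type} (s t : E → V) (σ : Finset E) : Prop :=
  (∀ e ∈ σ, ∀ f ∈ σ, e ≠ f → s e ≠ s f) ∧
  (∀ e ∈ σ, ∀ f ∈ σ, e ≠ f → t e ≠ t f) ∧
  NoDirCycleIn s t σ

/-- `σ` induces a directed forest: no two distinct edges share a target and there is
no directed cycle inside `σ`. -/
def IsDirForest {V E : Type} (s t : E → V) (σ : Finset E) : Prop :=
  (∀ e ∈ σ, ∀ f ∈ σ, e ≠ f → t e ≠ t f) ∧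
  NoDirCycleIn s t σ

/-- The directed linear forest complex `Dlf(D)`, as its set of faces. -/
def Dlf {V E : Type} (s t : E → V) : Set (Finset E) := {σ | IsLinearForest s t σ}

/-- The directed tree complex `DT(D)`, as its set of faces. -/
def DT {V E : Type} (s t : E → V) : Set (Finset E) := {σ | IsDirForest s t σ}

/-- The edges `e` and `f` have the same unordered pair of endpoints. -/
def SameEnds {V E : Type} (s t : E → V) (e f : E) : Prop :=
  (s e = s f ∧ t e = t f) ∨ (s e = t f ∧ t e = s f)

/-- Adjacency in the linear-forest conflict graph `G^lf_D`. -/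
def LFAdj {V E : Type} (s t : E → V) (e f : E) : Prop :=
  e ≠ f ∧ (s e = s f ∨ t e = t f ∨ SameEnds s t e f)

/-- Adjacency in the tree conflict graph `G^t_D`. -/
def TAdj {V E : Type} (s t : E → V) (e f : E) : Prop :=
  e ≠ f ∧ (t e = t f ∨ SameEnds s t e f)

/-- `σ` is an independent set for the adjacency relation `A`. -/
def IndepIn {E : Type} (A : E → E → Prop) (σ : Finset E) : Prop :=
  ∀ e ∈ σ, ∀ f ∈ σ, ¬ A e f

/-- `D` has no directed cycle of length at least 3 (directed 2-cycles are allowed). -/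
def TwoAcyclic {V E : Type} (s t : E → V) : Prop :=
  ∀ (n : ℕ) (σ : Finset E), 3 ≤ n → ¬ IsDirCycle s t n σ

/-- `D` has no directed cycles at all. -/
def Acyclic {V E : Type} (s t : E → V) : Prop :=
  ∀ (n : ℕ) (σ : Finset E), ¬ IsDirCycle s t n σ

/-- Adjacency in the underlying (simple, undirected) graph of `D`. -/
def UAdj {V E : Type} (s t : E → V) (u v : V) : Prop :=
  u ≠ v ∧ ∃ e, (s e = u ∧ t e = v) ∨ (s e = v ∧ t e = u)

/-- The underlying graph of `D` is a forest: it contains no cycle of length `≥ 3`. -/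
def UnderlyingForest {V E : Type} (s t : E → V) : Prop :=
  ¬ ∃ m : ℕ, 3 ≤ m ∧ ∃ h : ZMod m → V, Function.Injective h ∧
    ∀ i, UAdj s t (h i) (h (i + 1))

/-- An alternating closed trail: a cyclic sequence of distinct edges in which any two
cyclically consecutive edges share a source or share a target. -/
def HasAltClosedTrail {V E : Type} (s t : E → V) : Prop :=
  ∃ k : ℕ, 2 ≤ k ∧ ∃ g : ZMod k → E, Function.Injective g ∧
    ∀ i, s (g i) = s (g (i + 1)) ∨ t (g i) = t (g (i + 1))

/-- `D` has no induced subgraph isomorphic to `L₂`, the double directed string on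
three vertices. -/
def IsL2Free {V E : Type} (s t : E → V) : Prop :=
  ¬ ∃ a b c : V, a ≠ b ∧ b ≠ c ∧ a ≠ c ∧
    ∃ e1 e2 e3 e4 : E,
      e1 ≠ e2 ∧ e1 ≠ e3 ∧ e1 ≠ e4 ∧ e2 ≠ e3 ∧ e2 ≠ e4 ∧ e3 ≠ e4 ∧
      s e1 = a ∧ t e1 = b ∧ s e2 = b ∧ t e2 = a ∧
      s e3 = b ∧ t e3 = c ∧ s e4 = c ∧ t e4 = b ∧
      ∀ f : E, s f ∈ ({a, b, c} : Set V) → t f ∈ ({a, b, c} : Set V) →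
        f ∈ ({e1, e2, e3, e4} : Set E)

/-- The relation `A` (a graph on `β`) has an induced cycle of length at least 4. -/
def HasInducedCycleGE4 {β : Type} (A : β → β → Prop) : Prop :=
  ∃ n : ℕ, 4 ≤ n ∧ ∃ g : ZMod n → β, Function.Injective g ∧
    ∀ i j : ZMod n, i ≠ j → (A (g i) (g j) ↔ j = i + 1 ∨ i = j + 1)

/-! ## Simplicial complexes (as sets of faces). -/

/-- `σ` is a facet (inclusion-maximal face) of `Δ`. -/
def IsFacetOf {α : Type} (Δ : Set (Finset α)) (σ : Finset α) : Prop :=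
  σ ∈ Δ ∧ ∀ τ ∈ Δ, σ ⊆ τ → σ = τ

/-- Deletion of the vertex `v` in `Δ`. -/
def delC {α : Type} (Δ : Set (Finset α)) (v : α) : Set (Finset α) :=
  {τ ∈ Δ | v ∉ τ}

/-- Link of the vertex `v` in `Δ`. -/
def linkC {α : Type} [DecidableEq α] (Δ : Set (Finset α)) (v : α) : Set (Finset α) :=
  {τ | τ ∈ Δ ∧ v ∉ τ ∧ insert v τ ∈ Δ}

/-- `v` is a shedding vertex: every facet of the deletion is a facet of `Δ`. -/
def SheddingVertex {α : Type} (Δ : Set (Finset α)) (v : α) : Prop :=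
  ∀ σ, IsFacetOf (delC Δ v) σ → IsFacetOf Δ σ

/-- Vertex decomposability. -/
inductive VertexDecomposable {α : Type} [DecidableEq α] : Set (Finset α) → Prop
  | void : VertexDecomposable (∅ : Set (Finset α))
  | simplex (σ : Finset α) : VertexDecomposable {τ | τ ⊆ σ}
  | shed (Δ : Set (Finset α)) (v : α) :
      VertexDecomposable (linkC Δ v) → VertexDecomposable (delC Δ v) →
      SheddingVertex Δ v → VertexDecomposable Δ

/-- Shellability (in the non-pure sense of Björner–Wachs). -/
def Shellable {α : Type} (Δ : Set (Finset α)) : Prop :=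
  ∃ (m : ℕ) (F : Fin m → Finset α), Function.Injective F ∧
    (∀ σ, IsFacetOf Δ σ ↔ ∃ i, F i = σ) ∧
    ∀ i : Fin m, 0 < (i : ℕ) → ∀ τ : Finset α, τ ⊆ F i → (∃ j, j < i ∧ τ ⊆ F j) →
      ∃ ρ : Finset α, ρ ⊆ F i ∧ (∃ j, j < i ∧ ρ ⊆ F j) ∧
        ρ.card + 1 = (F i).card ∧ τ ⊆ ρ

/-- The pure `d`-skeleton of `Δ`: the subcomplex generated by the `d`-dimensional faces. -/
def pureSkel {α : Type} (Δ : Set (Finset α)) (d : ℕ) : Set (Finset α) :=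
  {τ | ∃ σ ∈ Δ, σ.card = d + 1 ∧ τ ⊆ σ}

/-- Link of a face `σ` in `Δ`. -/
def linkFaceC {α : Type} [DecidableEq α] (Δ : Set (Finset α)) (σ : Finset α) :
    Set (Finset α) :=
  {τ | τ ∩ σ = ∅ ∧ τ ∪ σ ∈ Δ}

/-- Connectivity of a simplicial complex: any two vertices are joined by an edge path. -/
def ComplexConnected {α : Type} [DecidableEq α] (Δ : Set (Finset α)) : Prop :=
  ∀ u v : α, ({u} : Finset α) ∈ Δ → ({v} : Finset α) ∈ Δ →
    Relation.ReflTransGen (fun a b => ({a, b} : Finset α) ∈ Δ) u v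

/-! ## Simplicial homology via ordered chains, and (sequential) Cohen–Macaulayness. -/

/-- A chain (a function on ordered tuples) is supported on faces of `Δ`. -/
def validChain {α K : Type} [DecidableEq α] [Field K] {k : ℕ}
    (Δ : Set (Finset α)) (c : (Fin k → α) → K) : Prop :=
  ∀ g, c g ≠ 0 → (Finset.univ.image g) ∈ Δ

/-- The simplicial boundary operator on ordered chains. -/
def bdry {α K : Type} [Fintype α] [Field K] {k : ℕ}
    (c : (Fin (k + 2) → α) → K) : (Fin (k + 1) → α) → K :=
  fun g => ∑ j : Fin (k + 2), (-1 : K) ^ (j : ℕ) * ∑ v : α, c (Fin.insertNth j v g)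

/-- Vanishing of the `i`-th reduced simplicial homology of `Δ` with coefficients in `K`
(computed with ordered chains; degree `0` uses the augmentation). -/
def RHomZero (α K : Type) [Fintype α] [DecidableEq α] [Field K]
    (Δ : Set (Finset α)) : ℕ → Prop
  | 0 => ∀ c : (Fin 1 → α) → K, validChain Δ c → (∑ g : Fin 1 → α, c g) = 0 →
      ∃ b : (Fin 2 → α) → K, validChain Δ b ∧ bdry b = c
  | (i + 1) => ∀ c : (Fin (i + 2) → α) → K, validChain Δ c → bdry c = 0 →
      ∃ b : (Fin (i + 3) → α) → K, validChain Δ b ∧ bdry b = c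

/-- `Δ` is Cohen–Macaulay over `K`: for every face `σ`, the reduced homology of its
link vanishes in all degrees strictly below the dimension of the link. -/
def IsCM (α K : Type) [Fintype α] [DecidableEq α] [Field K]
    (Δ : Set (Finset α)) : Prop :=
  ∀ σ ∈ Δ, ∀ i : ℕ, (∃ τ ∈ linkFaceC Δ σ, i + 2 ≤ τ.card) →
    RHomZero α K (linkFaceC Δ σ) i

/-- `Δ` is sequentially Cohen–Macaulay over `K`: every pure skeleton is Cohen–Macaulay. -/
def IsSCM (α K : Type) [Fintype α] [DecidableEq α] [Field K]
    (Δ : Set (Finset α)) : Prop :=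
  ∀ d : ℕ, IsCM α K (pureSkel Δ d)

/-! ## The double directed string `Lₙ` and the double directed cycle `Pₙ`. -/

/-- Source map of `Lₙ`: `inl i` is the edge `i → i+1`, `inr i` the edge `i+1 → i`. -/
def sL (n : ℕ) : Fin n ⊕ Fin n → Fin (n + 1) := Sum.elim Fin.castSucc Fin.succ

/-- Target map of `Lₙ`. -/
def tL (n : ℕ) : Fin n ⊕ Fin n → Fin (n + 1) := Sum.elim Fin.succ Fin.castSucc

/-- Source map of `Pₙ`: `inl i` is the edge `eᵢ : i → i+1`, `inr i` is `eᵢ' : i+1 → i`. -/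
def sP (n : ℕ) : ZMod n ⊕ ZMod n → ZMod n := Sum.elim id (fun i => i + 1)

/-- Target map of `Pₙ`. -/
def tP (n : ℕ) : ZMod n ⊕ ZMod n → ZMod n := Sum.elim (fun i => i + 1) id


section Lemmas
variable {n : ℕ}

local notation "α" => (Fin n ⊕ Fin n)

abbrev SLft (n : ℕ) : Finset (Fin n ⊕ Fin n) := Finset.univ.image Sum.inl
abbrev SRgt (n : ℕ) : Finset (Fin n ⊕ Fin n) := Finset.univ.image Sum.inr

lemma zmod2_cases : ∀ j : ZMod 2, j = 0 ∨ j = 1 := by decide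

lemma twoCycle (i : Fin n) :
    IsDirCycle (sL n) (tL n) 2 ({Sum.inl i, Sum.inr i} : Finset α) := by
  refine ⟨by norm_num, fun j => if j = 0 then Sum.inl i else Sum.inr i, ?_, ?_, ?_, ?_⟩
  · intro a b hab
    rcases zmod2_cases a with ha | ha <;> rcases zmod2_cases b with hb | hb <;>
      subst ha <;> subst hb <;> simp_all
  · intro e
    constructor
    · intro he
      rcases Finset.mem_insert.1 he with h | h
      · exact ⟨0, by simp [h]⟩
      · exact ⟨1, by simp [Finset.mem_singleton.1 h]⟩
    · rintro ⟨j, rfl⟩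
      rcases zmod2_cases j with hj | hj <;> subst hj <;> simp
  · intro a b hab
    rcases zmod2_cases a with ha | ha <;> rcases zmod2_cases b with hb | hb <;>
      subst ha <;> subst hb <;> simp_all [sL]
    · exact absurd (Fin.castSucc_lt_succ (i := i)) (by simp [hab])
    · exact absurd (Fin.castSucc_lt_succ (i := i)) (by simp [← hab])
  · intro j
    rcases zmod2_cases j with hj | hj <;> subst hj <;>
      simp [sL, tL, show (0:ZMod 2) + 1 = 1 by decide, show (1:ZMod 2) + 1 = 0 by decide]

lemma not_both {σ : Finset α} (hσ : σ ∈ Dlf (sL n) (tL n)) (i : Fin n)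
    (h1 : Sum.inl i ∈ σ) (h2 : Sum.inr i ∈ σ) : False :=
  hσ.2.2 2 {Sum.inl i, Sum.inr i} (by intro x hx; rcases Finset.mem_insert.1 hx with h | h
                                      · exact h ▸ h1
                                      · exact (Finset.mem_singleton.1 h) ▸ h2) (twoCycle i)

end Lemmas
section Lemmas2
variable {n : ℕ}
local notation "α" => (Fin n ⊕ Fin n)

lemma no_cycle_inl {m : ℕ} {τ : Finset α} (hL : ∀ e ∈ τ, ∃ x, e = Sum.inl x) :
    ¬ IsDirCycle (sL n) (tL n) m τ := by
  rintro ⟨hm, g, hginj, hmem, hsinj, hnext⟩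
  have ha : ∀ i, ∃ x, g i = Sum.inl x := fun i => hL (g i) ((hmem (g i)).2 ⟨i, rfl⟩)
  choose a hga using ha
  have hstep : ∀ i, (a (i + 1)).val = (a i).val + 1 := by
    intro i
    have := hnext i
    rw [hga i, hga (i + 1)] at this
    simpa [sL, tL, Fin.ext_iff] using this.symm
  have key : ∀ k : ℕ, (a ((k : ZMod m))).val = (a 0).val + k := by
    intro k
    induction k with
    | zero => simp
    | succ k ih =>
      have : ((k + 1 : ℕ) : ZMod m) = (k : ZMod m) + 1 := by push_cast; ring
      rw [this, hstep, ih]; ring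
  have := key n
  have h2 := (a ((n : ZMod m))).isLt
  omega

lemma no_cycle_inr {m : ℕ} {τ : Finset α} (hL : ∀ e ∈ τ, ∃ x, e = Sum.inr x) :
    ¬ IsDirCycle (sL n) (tL n) m τ := by
  rintro ⟨hm, g, hginj, hmem, hsinj, hnext⟩
  have ha : ∀ i, ∃ x, g i = Sum.inr x := fun i => hL (g i) ((hmem (g i)).2 ⟨i, rfl⟩)
  choose a hga using ha
  have hstep : ∀ i, (a i).val = (a (i + 1)).val + 1 := by
    intro i
    have := hnext i
    rw [hga i, hga (i + 1)] at this
    simpa [sL, tL, Fin.ext_iff] using this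
  have key : ∀ k : ℕ, (a 0).val = (a ((k : ZMod m))).val + k := by
    intro k
    induction k with
    | zero => simp
    | succ k ih =>
      have h1 : ((k + 1 : ℕ) : ZMod m) = (k : ZMod m) + 1 := by push_cast; ring
      rw [h1]
      rw [ih, hstep ((k : ZMod m))]
      ring
  have := key n
  have h2 := (a 0).isLt
  omega

lemma SL_mem : SLft n ∈ Dlf (sL n) (tL n) := by
  refine ⟨?_, ?_, ?_⟩
  · intro e he f hf hef
    simp only [SLft, Finset.mem_image] at he hf
    obtain ⟨i, -, rfl⟩ := he; obtain ⟨j, -, rfl⟩ := hf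
    simp only [sL, Sum.elim_inl]
    intro h
    exact hef (by rw [Fin.castSucc_inj.1 h])
  · intro e he f hf hef
    simp only [SLft, Finset.mem_image] at he hf
    obtain ⟨i, -, rfl⟩ := he; obtain ⟨j, -, rfl⟩ := hf
    simp only [tL, Sum.elim_inl]
    intro h
    exact hef (by rw [Fin.succ_inj.1 h])
  · intro m τ hτ
    refine no_cycle_inl (fun e he => ?_)
    have := hτ he
    simp only [SLft, Finset.mem_image] at this
    obtain ⟨i, -, rfl⟩ := this
    exact ⟨i, rfl⟩

lemma SR_mem : SRgt n ∈ Dlf (sL n) (tL n) := by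
  refine ⟨?_, ?_, ?_⟩
  · intro e he f hf hef
    simp only [SRgt, Finset.mem_image] at he hf
    obtain ⟨i, -, rfl⟩ := he; obtain ⟨j, -, rfl⟩ := hf
    simp only [sL, Sum.elim_inr]
    intro h
    exact hef (by rw [Fin.succ_inj.1 h])
  · intro e he f hf hef
    simp only [SRgt, Finset.mem_image] at he hf
    obtain ⟨i, -, rfl⟩ := he; obtain ⟨j, -, rfl⟩ := hf
    simp only [tL, Sum.elim_inr]
    intro h
    exact hef (by rw [Fin.castSucc_inj.1 h])
  · intro m τ hτ
    refine no_cycle_inr (fun e he => ?_)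
    have := hτ he
    simp only [SRgt, Finset.mem_image] at this
    obtain ⟨i, -, rfl⟩ := this
    exact ⟨i, rfl⟩

lemma SL_card : (SLft n).card = n := by
  rw [Finset.card_image_of_injective _ Sum.inl_injective, Finset.card_univ, Fintype.card_fin]

lemma SR_card : (SRgt n).card = n := by
  rw [Finset.card_image_of_injective _ Sum.inr_injective, Finset.card_univ, Fintype.card_fin]

end Lemmas2
section Lemmas3
variable {n : ℕ}
local notation "α" => (Fin n ⊕ Fin n)

/-- Conflict constraints between an `inl` and an `inr` edge in a face. -/
lemma conflict {σ : Finset α} (hσ : σ ∈ Dlf (sL n) (tL n)) {i j : Fin n}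
    (hi : Sum.inl i ∈ σ) (hj : Sum.inr j ∈ σ) :
    i ≠ j ∧ (i : ℕ) ≠ (j : ℕ) + 1 ∧ (j : ℕ) ≠ (i : ℕ) + 1 := by
  refine ⟨?_, ?_, ?_⟩
  · rintro rfl; exact not_both hσ i hi hj
  · intro h
    exact hσ.1 _ hi _ hj (by simp) (by simp [sL, Fin.ext_iff, h])
  · intro h
    exact hσ.2.1 _ hi _ hj (by simp) (by simp [tL, Fin.ext_iff, h.symm])

lemma adj_pair_aux : ∀ d : ℕ, ∀ A B : Finset (Fin n), (∀ x, x ∈ A ∨ x ∈ B) →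
    (∀ i ∈ A, ∀ j ∈ B, i ≠ j ∧ (i : ℕ) ≠ (j : ℕ) + 1 ∧ (j : ℕ) ≠ (i : ℕ) + 1) →
    ∀ a ∈ A, ∀ b ∈ B, (a : ℕ) < (b : ℕ) → (b : ℕ) - (a : ℕ) ≤ d → False := by
  intro d
  induction d with
  | zero => intro A B hU hcon a ha b hb hlt hle; omega
  | succ d ih =>
    intro A B hU hcon a ha b hb hlt hle
    have hgap : (b : ℕ) ≠ (a : ℕ) + 1 := (hcon a ha b hb).2.2
    have hc : (a : ℕ) + 1 < n := lt_of_lt_of_le (by omega) (Nat.le_of_lt_succ (Nat.lt_succ_of_lt b.isLt))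
    set c : Fin n := ⟨(a : ℕ) + 1, by omega⟩ with hcdef
    rcases hU c with hcA | hcB
    · exact ih A B hU hcon c hcA b hb (by simp [hcdef]; omega) (by simp [hcdef]; omega)
    · exact (hcon a ha c hcB).2.2 (by simp [hcdef])

lemma adj_pair {A B : Finset (Fin n)} (hU : ∀ x, x ∈ A ∨ x ∈ B)
    (hcon : ∀ i ∈ A, ∀ j ∈ B, i ≠ j ∧ (i : ℕ) ≠ (j : ℕ) + 1 ∧ (j : ℕ) ≠ (i : ℕ) + 1)
    (hA : A.Nonempty) (hB : B.Nonempty) : False := by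
  obtain ⟨a, ha⟩ := hA
  obtain ⟨b, hb⟩ := hB
  rcases lt_trichotomy (a : ℕ) (b : ℕ) with h | h | h
  · exact adj_pair_aux ((b : ℕ) - (a : ℕ)) A B hU hcon a ha b hb h le_rfl
  · exact (hcon a ha b hb).1 (Fin.ext h)
  · refine adj_pair_aux ((a : ℕ) - (b : ℕ)) B A (fun x => (hU x).symm) ?_ b hb a ha h le_rfl
    intro i hi j hj
    obtain ⟨h1, h2, h3⟩ := hcon j hj i hi
    exact ⟨h1.symm, h3, h2⟩

lemma faces_card_n (hn : 2 ≤ n) (σ : Finset α) :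
    (σ ∈ Dlf (sL n) (tL n) ∧ σ.card = n) ↔ (σ = SLft n ∨ σ = SRgt n) := by
  constructor
  · rintro ⟨hσ, hcard⟩
    set A := σ.toLeft with hA
    set B := σ.toRight with hB
    have hcon : ∀ i ∈ A, ∀ j ∈ B, i ≠ j ∧ (i : ℕ) ≠ (j : ℕ) + 1 ∧ (j : ℕ) ≠ (i : ℕ) + 1 := by
      intro i hi j hj
      exact conflict hσ (Finset.mem_toLeft.1 hi) (Finset.mem_toRight.1 hj)
    have hcards : A.card + B.card = n := by rw [Finset.card_toLeft_add_card_toRight, hcard]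
    have hdisj : Disjoint A B := by
      rw [Finset.disjoint_left]
      intro x hx hx'
      exact (hcon x hx x hx').1 rfl
    have hunion : A ∪ B = Finset.univ := by
      apply Finset.eq_univ_of_card
      rw [Finset.card_union_of_disjoint hdisj, hcards, Fintype.card_fin]
    have hU : ∀ x, x ∈ A ∨ x ∈ B := by
      intro x
      have : x ∈ A ∪ B := hunion ▸ Finset.mem_univ x
      exact Finset.mem_union.1 this
    rcases Finset.eq_empty_or_nonempty A with hAe | hAne
    · right
      have hBu : B = Finset.univ := by
        rw [← hunion, hAe, Finset.empty_union]
      ext e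
      rcases e with i | i
      · simp only [SRgt, Finset.mem_image]
        constructor
        · intro h
          exact absurd (Finset.mem_toLeft.2 h) (by rw [← hA, hAe]; simp)
        · rintro ⟨j, -, h⟩; exact absurd h (by simp)
      · simp only [SRgt, Finset.mem_image]
        constructor
        · intro _; exact ⟨i, Finset.mem_univ i, rfl⟩
        · intro _
          exact Finset.mem_toRight.1 (by rw [← hB, hBu]; exact Finset.mem_univ i)
    · rcases Finset.eq_empty_or_nonempty B with hBe | hBne
      · left
        have hAu : A = Finset.univ := by
          rw [← hunion, hBe, Finset.union_empty]
        ext e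
        rcases e with i | i
        · simp only [SLft, Finset.mem_image]
          constructor
          · intro _; exact ⟨i, Finset.mem_univ i, rfl⟩
          · intro _
            exact Finset.mem_toLeft.1 (by rw [← hA, hAu]; exact Finset.mem_univ i)
        · simp only [SLft, Finset.mem_image]
          constructor
          · intro h
            exact absurd (Finset.mem_toRight.2 h) (by rw [← hB, hBe]; simp)
          · rintro ⟨j, -, h⟩; exact absurd h (by simp)
      · exact absurd (adj_pair hU hcon hAne hBne) (not_false)
  · rintro (rfl | rfl)
    · exact ⟨SL_mem, SL_card⟩
    · exact ⟨SR_mem, SR_card⟩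

end Lemmas3
section Lemmas4
variable {n : ℕ}
local notation "α" => (Fin n ⊕ Fin n)

lemma skel_mem_sub (hn : 2 ≤ n) {τ : Finset α}
    (hτ : τ ∈ pureSkel (Dlf (sL n) (tL n)) (n - 1)) :
    τ ⊆ SLft n ∨ τ ⊆ SRgt n := by
  obtain ⟨σ, hσ, hcardσ, hsub⟩ := hτ
  have hc : σ.card = n := by rw [hcardσ]; omega
  rcases (faces_card_n hn σ).1 ⟨hσ, hc⟩ with rfl | rfl
  · exact Or.inl hsub
  · exact Or.inr hsub

lemma skel_edge_same (hn : 2 ≤ n) {a b : α}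
    (h : ({a, b} : Finset α) ∈ pureSkel (Dlf (sL n) (tL n)) (n - 1)) :
    a.isLeft = b.isLeft := by
  rcases skel_mem_sub hn h with hs | hs
  · have ha := hs (Finset.mem_insert_self a {b})
    have hb := hs (Finset.mem_insert_of_mem (Finset.mem_singleton_self b))
    simp only [SLft, Finset.mem_image] at ha hb
    obtain ⟨i, -, rfl⟩ := ha; obtain ⟨j, -, rfl⟩ := hb; rfl
  · have ha := hs (Finset.mem_insert_self a {b})
    have hb := hs (Finset.mem_insert_of_mem (Finset.mem_singleton_self b))
    simp only [SRgt, Finset.mem_image] at ha hb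
    obtain ⟨i, -, rfl⟩ := ha; obtain ⟨j, -, rfl⟩ := hb; rfl

lemma SL_mem_skel (hn : 2 ≤ n) : SLft n ∈ pureSkel (Dlf (sL n) (tL n)) (n - 1) :=
  ⟨SLft n, SL_mem, by rw [SL_card]; omega, le_refl _⟩

lemma SR_mem_skel (hn : 2 ≤ n) : SRgt n ∈ pureSkel (Dlf (sL n) (tL n)) (n - 1) :=
  ⟨SRgt n, SR_mem, by rw [SR_card]; omega, le_refl _⟩

lemma skel_disconnected (hn : 2 ≤ n) :
    ¬ ComplexConnected (pureSkel (Dlf (sL n) (tL n)) (n - 1)) := by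
  intro h
  have h0 : (0 : ℕ) < n := by omega
  have hu : ({Sum.inl ⟨0, h0⟩} : Finset α) ∈ pureSkel (Dlf (sL n) (tL n)) (n - 1) :=
    ⟨SLft n, SL_mem, by rw [SL_card]; omega, by
      simp [SLft, Finset.singleton_subset_iff]⟩
  have hv : ({Sum.inr ⟨0, h0⟩} : Finset α) ∈ pureSkel (Dlf (sL n) (tL n)) (n - 1) :=
    ⟨SRgt n, SR_mem, by rw [SR_card]; omega, by
      simp [SRgt, Finset.singleton_subset_iff]⟩
  have hpath := h (Sum.inl ⟨0, h0⟩) (Sum.inr ⟨0, h0⟩) hu hv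
  have hinv : ∀ u v : α,
      Relation.ReflTransGen (fun a b => ({a, b} : Finset α) ∈ pureSkel (Dlf (sL n) (tL n)) (n - 1)) u v →
      u.isLeft = v.isLeft := by
    intro u v hp
    induction hp with
    | refl => rfl
    | tail _ hstep ih => exact ih.trans (skel_edge_same hn hstep)
  have := hinv _ _ hpath
  simp at this

end Lemmas4
section Lemmas5
variable {n : ℕ}
local notation "α" => (Fin n ⊕ Fin n)

lemma link_empty {Δ : Set (Finset α)} : linkFaceC Δ (∅ : Finset α) = Δ := by
  ext τ; simp [linkFaceC]

lemma image_fin_one (g : Fin 1 → (Fin n ⊕ Fin n)) :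
    Finset.univ.image g = {g 0} := by
  ext x
  simp [Finset.mem_image, Fin.exists_fin_one]

lemma image_fin_two (v u : Fin n ⊕ Fin n) :
    Finset.univ.image (Fin.cons v (fun _ => u) : Fin 2 → (Fin n ⊕ Fin n)) = {v, u} := by
  ext x
  simp [Finset.mem_image, Fin.exists_fin_two]
  constructor
  · rintro (h | h)
    · exact Or.inl h.symm
    · exact Or.inr h.symm
  · rintro (rfl | rfl)
    · exact Or.inl rfl
    · exact Or.inr rfl

lemma snoc_eq_cons (u v : Fin n ⊕ Fin n) :
    (Fin.snoc (fun _ => u) v : Fin 2 → (Fin n ⊕ Fin n)) = Fin.cons u (fun _ => v) := by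
  funext i
  fin_cases i <;> rfl

lemma not_SCM (hn : 2 ≤ n) (K : Type) [Field K] :
    ¬ IsSCM (Fin n ⊕ Fin n) K (Dlf (sL n) (tL n)) := by
  intro hSCM
  set Δ' := pureSkel (Dlf (sL n) (tL n)) (n - 1) with hΔ'
  have h0 : (0 : ℕ) < n := by omega
  set z : Fin n := ⟨0, h0⟩ with hz
  have hSLskel : SLft n ∈ Δ' := SL_mem_skel hn
  have hempty : (∅ : Finset α) ∈ Δ' := ⟨SLft n, SL_mem, by rw [SL_card]; omega, Finset.empty_subset _⟩
  have hcond : ∃ τ ∈ linkFaceC Δ' (∅ : Finset α), 0 + 2 ≤ τ.card := by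
    refine ⟨SLft n, ?_, ?_⟩
    · rw [link_empty]; exact hSLskel
    · rw [SL_card]; omega
  have hR : RHomZero (Fin n ⊕ Fin n) K (linkFaceC Δ' (∅ : Finset α)) 0 :=
    hSCM (n - 1) ∅ hempty 0 hcond
  rw [link_empty] at hR
  -- the 0-cycle: [inl z] - [inr z]
  set c : (Fin 1 → α) → K :=
    fun g => (if g 0 = Sum.inl z then (1 : K) else 0) - (if g 0 = Sum.inr z then (1 : K) else 0)
    with hc
  have hu : ({Sum.inl z} : Finset α) ∈ Δ' :=
    ⟨SLft n, SL_mem, by rw [SL_card]; omega, by simp [SLft, Finset.singleton_subset_iff]⟩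
  have hv : ({Sum.inr z} : Finset α) ∈ Δ' :=
    ⟨SRgt n, SR_mem, by rw [SR_card]; omega, by simp [SRgt, Finset.singleton_subset_iff]⟩
  have hvalid : validChain Δ' c := by
    intro g hg
    rw [image_fin_one]
    rcases eq_or_ne (g 0) (Sum.inl z) with h | h
    · rw [h]; exact hu
    · rcases eq_or_ne (g 0) (Sum.inr z) with h' | h'
      · rw [h']; exact hv
      · exfalso; apply hg; simp [hc, h, h']
  have hsum : (∑ g : Fin 1 → α, c g) = 0 := by
    rw [Fintype.sum_equiv (Equiv.funUnique (Fin 1) (Fin n ⊕ Fin n)) c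
      (fun a => (if a = Sum.inl z then (1 : K) else 0) - (if a = Sum.inr z then (1 : K) else 0))
      (fun g => rfl)]
    rw [Finset.sum_sub_distrib]
    simp [Finset.sum_ite_eq']
  obtain ⟨b, hvb, hbd⟩ := hR c hvalid hsum
  -- the invariant function
  set φ : α → K := fun e => if e.isLeft then (1 : K) else 0 with hφ
  have hsame : ∀ v u : α, b (Fin.cons v (fun _ => u)) ≠ 0 → φ v = φ u := by
    intro v u hbne
    have := hvb _ hbne
    rw [image_fin_two] at this
    have := skel_edge_same hn this
    simp [hφ, this]
  have hbdry : ∀ u : α, bdry b (fun _ => u) =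
      (∑ v : α, b (Fin.cons v (fun _ => u))) - (∑ v : α, b (Fin.cons u (fun _ => v))) := by
    intro u
    rw [show (bdry b (fun _ => u)) =
      ∑ j : Fin 2, (-1 : K) ^ (j : ℕ) * ∑ v : α, b (Fin.insertNth j v (fun _ => u)) from rfl]
    rw [Fin.sum_univ_two]
    have h1 : ∀ v : α, (Fin.insertNth (0 : Fin 2) v (fun _ => u) : Fin 2 → Fin n ⊕ Fin n)
        = (Fin.cons v (fun _ => u) : Fin 2 → Fin n ⊕ Fin n) := by
      intro v; funext i; fin_cases i <;> rfl
    have h2 : ∀ v : α, (Fin.insertNth (1 : Fin 2) v (fun _ => u) : Fin 2 → Fin n ⊕ Fin n)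
        = (Fin.cons u (fun _ => v) : Fin 2 → Fin n ⊕ Fin n) := by
      intro v; funext i; fin_cases i <;> rfl
    simp only [h1, h2, Fin.isValue, Fin.val_zero, Fin.val_one, pow_zero, pow_one]
    ring
  have hT0 : (∑ u : α, φ u * bdry b (fun _ => u)) = 0 := by
    have : ∀ u : α, φ u * bdry b (fun _ => u) =
        (∑ v : α, φ u * b (Fin.cons v (fun _ => u))) - (∑ v : α, φ u * b (Fin.cons u (fun _ => v))) := by
      intro u
      rw [hbdry u, mul_sub, Finset.mul_sum, Finset.mul_sum]
    rw [Finset.sum_congr rfl (fun u _ => this u), Finset.sum_sub_distrib]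
    rw [Finset.sum_comm (f := fun u v => φ u * b (Fin.cons v (fun _ => u)))]
    rw [← Finset.sum_sub_distrib]
    rw [Finset.sum_congr rfl (fun v _ => (Finset.sum_sub_distrib _ _).symm)]
    apply Finset.sum_eq_zero
    intro v _
    apply Finset.sum_eq_zero
    intro u _
    rcases eq_or_ne (b (Fin.cons v (fun _ => u))) 0 with hb0 | hb0
    · rw [hb0]; ring
    · rw [hsame v u hb0]; ring
  have hT1 : (∑ u : α, φ u * bdry b (fun _ => u)) = 1 := by
    rw [hbd]
    have : ∀ u : α, φ u * c (fun _ => u) =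
        (if u = Sum.inl z then φ u else 0) - (if u = Sum.inr z then φ u else 0) := by
      intro u
      simp only [hc, mul_sub, mul_ite, mul_one, mul_zero]
    rw [Finset.sum_congr rfl (fun u _ => this u), Finset.sum_sub_distrib]
    rw [Finset.sum_ite_eq' Finset.univ (Sum.inl z) φ, Finset.sum_ite_eq' Finset.univ (Sum.inr z) φ]
    simp [hφ]
  rw [hT0] at hT1
  exact zero_ne_one hT1

end Lemmas5
section Lemmas6
variable {n : ℕ}
local notation "α" => (Fin n ⊕ Fin n)

lemma SL_facet : IsFacetOf (Dlf (sL n) (tL n)) (SLft n) := by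
  refine ⟨SL_mem, ?_⟩
  intro τ hτ hsub
  apply Finset.Subset.antisymm hsub
  intro e he
  rcases e with i | j
  · simp [SLft]
  · exact absurd he (fun he => not_both hτ j (hsub (by simp [SLft])) he)

lemma SR_facet : IsFacetOf (Dlf (sL n) (tL n)) (SRgt n) := by
  refine ⟨SR_mem, ?_⟩
  intro τ hτ hsub
  apply Finset.Subset.antisymm hsub
  intro e he
  rcases e with i | j
  · exact absurd he (fun he => not_both hτ i he (hsub (by simp [SRgt])))
  · simp [SRgt]

lemma sub_SR (hn : 2 ≤ n) {ρ σ : Finset α} (hρ : ρ ⊆ SRgt n) (hcard : ρ.card + 1 = n)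
    (hσ : σ ∈ Dlf (sL n) (tL n)) (hρσ : ρ ⊆ σ) : σ ⊆ SRgt n := by
  have hBL : ρ.toLeft = ∅ := by
    rw [Finset.eq_empty_iff_forall_notMem]
    intro x hx
    have := hρ (Finset.mem_toLeft.1 hx)
    simp [SRgt] at this
  have hBcard : ρ.toRight.card = n - 1 := by
    have h := Finset.card_toLeft_add_card_toRight (u := ρ)
    rw [hBL] at h
    simp at h
    omega
  have hcompl : (ρ.toRight)ᶜ.card = 1 := by
    rw [Finset.card_compl, hBcard, Fintype.card_fin]
    omega
  obtain ⟨k, hk⟩ := Finset.card_eq_one.1 hcompl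
  have hmem : ∀ j : Fin n, j ≠ k → Sum.inr j ∈ σ := by
    intro j hj
    have hjB : j ∈ ρ.toRight := by
      by_contra hj'
      have := Finset.mem_compl.2 hj'
      rw [hk] at this
      exact hj (Finset.mem_singleton.1 this)
    exact hρσ (Finset.mem_toRight.1 hjB)
  intro e he
  rcases e with i | j
  · exfalso
    have hik : i = k := by
      by_contra h
      exact (conflict hσ he (hmem i h)).1 rfl
    subst hik
    rcases Nat.lt_or_ge (i.val + 1) n with hlt | hge
    · set j2 : Fin n := ⟨i.val + 1, hlt⟩ with hj2d
      have hj2 : j2 ≠ i := by simp [hj2d, Fin.ext_iff]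
      have h3 := (conflict hσ he (hmem j2 hj2)).2.2
      simp [hj2d] at h3
    · have h1 : 1 ≤ i.val := by have := i.isLt; omega
      set j2 : Fin n := ⟨i.val - 1, by omega⟩ with hj2d
      have hj2 : j2 ≠ i := by simp [hj2d, Fin.ext_iff]; omega
      have h3 := (conflict hσ he (hmem j2 hj2)).2.1
      simp [hj2d] at h3
      omega
  · simp [SRgt]

lemma sub_SL (hn : 2 ≤ n) {ρ σ : Finset α} (hρ : ρ ⊆ SLft n) (hcard : ρ.card + 1 = n)
    (hσ : σ ∈ Dlf (sL n) (tL n)) (hρσ : ρ ⊆ σ) : σ ⊆ SLft n := by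
  have hBL : ρ.toRight = ∅ := by
    rw [Finset.eq_empty_iff_forall_notMem]
    intro x hx
    have := hρ (Finset.mem_toRight.1 hx)
    simp [SLft] at this
  have hBcard : ρ.toLeft.card = n - 1 := by
    have h := Finset.card_toLeft_add_card_toRight (u := ρ)
    rw [hBL] at h
    simp at h
    omega
  have hcompl : (ρ.toLeft)ᶜ.card = 1 := by
    rw [Finset.card_compl, hBcard, Fintype.card_fin]
    omega
  obtain ⟨k, hk⟩ := Finset.card_eq_one.1 hcompl
  have hmem : ∀ i : Fin n, i ≠ k → Sum.inl i ∈ σ := by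
    intro i hi
    have hiA : i ∈ ρ.toLeft := by
      by_contra hi'
      have := Finset.mem_compl.2 hi'
      rw [hk] at this
      exact hi (Finset.mem_singleton.1 this)
    exact hρσ (Finset.mem_toLeft.1 hiA)
  intro e he
  rcases e with i | j
  · simp [SLft]
  · exfalso
    have hjk : j = k := by
      by_contra h
      exact (conflict hσ (hmem j h) he).1 rfl
    subst hjk
    rcases Nat.lt_or_ge (j.val + 1) n with hlt | hge
    · set i2 : Fin n := ⟨j.val + 1, hlt⟩ with hi2d
      have hi2 : i2 ≠ j := by simp [hi2d, Fin.ext_iff]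
      have h3 := (conflict hσ (hmem i2 hi2) he).2.1
      simp [hi2d] at h3
    · have h1 : 1 ≤ j.val := by have := j.isLt; omega
      set i2 : Fin n := ⟨j.val - 1, by omega⟩ with hi2d
      have hi2 : i2 ≠ j := by simp [hi2d, Fin.ext_iff]; omega
      have h3 := (conflict hσ (hmem i2 hi2) he).2.2
      simp [hi2d] at h3
      omega

lemma not_shellable (hn : 2 ≤ n) : ¬ Shellable (Dlf (sL n) (tL n)) := by
  rintro ⟨m, F, hFinj, hFfac, hshell⟩
  have h0 : (0 : ℕ) < n := by omega
  obtain ⟨iL, hiL⟩ := (hFfac _).1 (SL_facet (n := n))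
  obtain ⟨iR, hiR⟩ := (hFfac _).1 (SR_facet (n := n))
  have hne : SLft n ≠ SRgt n := by
    intro h
    have : Sum.inl (⟨0, h0⟩ : Fin n) ∈ SRgt n := h ▸ (by simp [SLft])
    simp [SRgt] at this
  have hine : iL ≠ iR := fun h => hne (by rw [← hiL, ← hiR, h])
  have main : ∀ (i : Fin m) (S : Finset α), 0 < (i : ℕ) → F i = S →
      S ∈ Dlf (sL n) (tL n) →
      (∀ ρ σ, ρ ⊆ S → ρ.card + 1 = n → σ ∈ Dlf (sL n) (tL n) → ρ ⊆ σ → σ ⊆ S) →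
      S.card = n → False := by
    intro i S hpos hFi hSmem hprop hScard
    have hj0 : (⟨0, lt_of_le_of_lt (Nat.zero_le _) i.isLt⟩ : Fin m) < i := by
      simp [Fin.lt_def]
      omega
    obtain ⟨ρ, hρi, ⟨j, hji, hρj⟩, hcard, -⟩ :=
      hshell i hpos ∅ (Finset.empty_subset _)
        ⟨⟨0, lt_of_le_of_lt (Nat.zero_le _) i.isLt⟩, hj0, Finset.empty_subset _⟩
    have hFj : IsFacetOf (Dlf (sL n) (tL n)) (F j) := (hFfac _).2 ⟨j, rfl⟩
    have hρS : ρ ⊆ S := hFi ▸ hρi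
    have hcard' : ρ.card + 1 = n := by rw [hFi] at hcard; omega
    have hFjS : F j ⊆ S := hprop ρ (F j) hρS hcard' hFj.1 hρj
    have : F j = S := hFj.2 S hSmem hFjS
    have : j = i := hFinj (by rw [this, hFi])
    rw [this] at hji
    exact lt_irrefl _ hji
  rcases Nat.eq_zero_or_pos (iR : ℕ) with hR0 | hRpos
  · have hLpos : 0 < (iL : ℕ) := by
      rcases Nat.eq_zero_or_pos (iL : ℕ) with h | h
      · exact absurd (Fin.ext (by rw [h, hR0])) hine
      · exact h
    exact main iL (SLft n) hLpos hiL SL_mem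
      (fun ρ σ hρ hc hσ hρσ => sub_SL hn hρ hc hσ hρσ) SL_card
  · exact main iR (SRgt n) hRpos hiR SR_mem
      (fun ρ σ hρ hc hσ hρσ => sub_SR hn hρ hc hσ hρσ) SR_card

end Lemmas6

/-- For `n ≥ 2`, the only faces of `Dlf(Lₙ)` of cardinality `n` are
`{e₁, …, eₙ}` and `{e₁', …, eₙ'}`; the pure `(n−1)`-skeleton of `Dlf(Lₙ)` is
disconnected; hence `Dlf(Lₙ)` is not sequentially Cohen–Macaulay (over any field)
and not shellable. -/
theorem statement_10 (n : ℕ) (hn : 2 ≤ n) :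
    (∀ σ : Finset (Fin n ⊕ Fin n),
        (σ ∈ Dlf (sL n) (tL n) ∧ σ.card = n) ↔
        (σ = Finset.univ.image Sum.inl ∨ σ = Finset.univ.image Sum.inr)) ∧
    ¬ ComplexConnected (pureSkel (Dlf (sL n) (tL n)) (n - 1)) ∧
    (∀ (K : Type) [Field K], ¬ IsSCM (Fin n ⊕ Fin n) K (Dlf (sL n) (tL n))) ∧
    ¬ Shellable (Dlf (sL n) (tL n)) := by
  exact ⟨fun σ => faces_card_n hn σ, skel_disconnected hn, fun K _ => not_SCM hn K,
    not_shellable hn⟩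

end ArXiv
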